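/- Let d, m and M be positive integers. Assume that H is a non-empty graph satisfying: (1) for every U ⊆ V(H) with 0 < |U| ≤ m, |N_H(U)| ≥ d|U| + 1; and (2) for every U ⊆ V(H) with m < |U| ≤ 2m, |N_H(U)| ≥ d|U| + M. Then H contains a copy of every tree T with M vertices and maximum degree at most d. -/

import Mathlib

set_option linter.unusedSectionVars false
set_option linter.dupNamespace false
set_option maxHeartbeats 1000000


open scoped Classical

/-- `N_H(U)`: the set of vertices of `V(H) ∖ U` having a neighbor in `U`. -/
noncomputable def extNbhd {V : Type*} [Fintype V] (H : SimpleGraph V) (U : Finset V) :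
    Finset V :=
  (Finset.univ \ U).filter (fun v => ∃ u ∈ U, H.Adj u v)

namespace Haxell

variable {V : Type*} [Fintype V] (H : SimpleGraph V)

lemma mem_extNbhd {U : Finset V} {v : V} :
    v ∈ extNbhd H U ↔ v ∉ U ∧ ∃ u ∈ U, H.Adj u v := by
  simp [extNbhd]

/-- closed neighborhood -/
noncomputable def clN (U : Finset V) : Finset V :=
  Finset.univ.filter (fun v => v ∈ U ∨ ∃ u ∈ U, H.Adj u v)

lemma mem_clN {U : Finset V} {v : V} :
    v ∈ clN H U ↔ v ∈ U ∨ ∃ u ∈ U, H.Adj u v := by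
  simp [clN]

lemma clN_union (A B : Finset V) : clN H (A ∪ B) = clN H A ∪ clN H B := by
  ext v
  simp only [mem_clN, Finset.mem_union]
  constructor
  · rintro (h | ⟨u, hu | hu, hadj⟩)
    · rcases h with h | h
      · exact Or.inl (Or.inl h)
      · exact Or.inr (Or.inl h)
    · exact Or.inl (Or.inr ⟨u, hu, hadj⟩)
    · exact Or.inr (Or.inr ⟨u, hu, hadj⟩)
  · rintro ((h | ⟨u, hu, hadj⟩) | (h | ⟨u, hu, hadj⟩))
    · exact Or.inl (Or.inl h)
    · exact Or.inr ⟨u, Or.inl hu, hadj⟩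
    · exact Or.inl (Or.inr h)
    · exact Or.inr ⟨u, Or.inr hu, hadj⟩

lemma clN_inter_subset (A B : Finset V) : clN H (A ∩ B) ⊆ clN H A ∩ clN H B := by
  intro v hv
  rw [mem_clN] at hv
  rw [Finset.mem_inter, mem_clN, mem_clN]
  rcases hv with h | ⟨u, hu, hadj⟩
  · rw [Finset.mem_inter] at h
    exact ⟨Or.inl h.1, Or.inl h.2⟩
  · rw [Finset.mem_inter] at hu
    exact ⟨Or.inr ⟨u, hu.1, hadj⟩, Or.inr ⟨u, hu.2, hadj⟩⟩

lemma clN_sdiff_card (U F : Finset V) :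
    (clN H U \ F).card = (U \ F).card + (extNbhd H U \ F).card := by
  have hdisj : Disjoint (U \ F) (extNbhd H U \ F) := by
    apply Finset.disjoint_left.2
    intro v hv hv'
    rw [Finset.mem_sdiff] at hv hv'
    exact (mem_extNbhd H).1 hv'.1 |>.1 hv.1
  rw [← Finset.card_union_of_disjoint hdisj]
  congr 1
  ext v
  simp only [Finset.mem_sdiff, Finset.mem_union, mem_clN, mem_extNbhd]
  constructor
  · rintro ⟨h | h, hF⟩
    · exact Or.inl ⟨h, hF⟩
    · by_cases hvU : v ∈ U
      · exact Or.inl ⟨hvU, hF⟩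
      · exact Or.inr ⟨⟨hvU, h⟩, hF⟩
  · rintro (⟨h, hF⟩ | ⟨⟨_, h⟩, hF⟩)
    · exact ⟨Or.inl h, hF⟩
    · exact ⟨Or.inr h, hF⟩

/-- Submodularity of `U ↦ |extNbhd U \ F|`. -/
lemma extNbhd_submod (F A B : Finset V) :
    (extNbhd H (A ∪ B) \ F).card + (extNbhd H (A ∩ B) \ F).card ≤
      (extNbhd H A \ F).card + (extNbhd H B \ F).card := by
  have h1 : (clN H (A ∪ B) \ F).card + (clN H (A ∩ B) \ F).card ≤
      (clN H A \ F).card + (clN H B \ F).card := by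
    have e1 : clN H (A ∪ B) \ F = (clN H A \ F) ∪ (clN H B \ F) := by
      rw [clN_union, Finset.union_sdiff_distrib]
    have e2 : clN H (A ∩ B) \ F ⊆ (clN H A \ F) ∩ (clN H B \ F) := by
      intro v hv
      rw [Finset.mem_sdiff] at hv
      have := clN_inter_subset H A B hv.1
      rw [Finset.mem_inter] at this ⊢
      exact ⟨Finset.mem_sdiff.2 ⟨this.1, hv.2⟩, Finset.mem_sdiff.2 ⟨this.2, hv.2⟩⟩
    calc (clN H (A ∪ B) \ F).card + (clN H (A ∩ B) \ F).card
        ≤ ((clN H A \ F) ∪ (clN H B \ F)).card + ((clN H A \ F) ∩ (clN H B \ F)).card := by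
          rw [e1]; exact Nat.add_le_add_left (Finset.card_le_card e2) _
      _ = (clN H A \ F).card + (clN H B \ F).card := Finset.card_union_add_card_inter _ _
  have h2 : ((A ∪ B) \ F).card + ((A ∩ B) \ F).card = (A \ F).card + (B \ F).card := by
    have e3 : (A ∩ B) \ F = (A \ F) ∩ (B \ F) := by
      ext v; simp only [Finset.mem_sdiff, Finset.mem_inter]; tauto
    rw [Finset.union_sdiff_distrib, e3]
    exact Finset.card_union_add_card_inter _ _
  have c1 := clN_sdiff_card H (A ∪ B) F
  have c2 := clN_sdiff_card H (A ∩ B) F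
  have c3 := clN_sdiff_card H A F
  have c4 := clN_sdiff_card H B F
  omega

variable {γ : Type*} [Fintype γ] {T : SimpleGraph γ}

lemma extNbhd_empty (H : SimpleGraph V) : extNbhd H ∅ = ∅ := by
  ext v; simp [mem_extNbhd]

noncomputable def rem (T : SimpleGraph γ) (S : Finset γ) (s : γ) : ℕ :=
  (T.neighborFinset s \ S).card

noncomputable def dem (T : SimpleGraph γ) (d : ℕ) (S : Finset γ) (f : γ → V)
    (U : Finset V) : ℕ :=
  d * (U \ S.image f).card + ∑ s ∈ S.filter (fun s => f s ∈ U), rem T S s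

lemma dem_empty (T : SimpleGraph γ) (d : ℕ) (S : Finset γ) (f : γ → V) :
    dem T d S f ∅ = 0 := by
  simp [dem]

/-- The goodness invariant for a partial embedding `f` of the subtree on `S`, rooted at `r`. -/
def Good (H : SimpleGraph V) (T : SimpleGraph γ) (d m : ℕ) (S : Finset γ) (f : γ → V)
    (r : γ) : Prop :=
  r ∈ S ∧ Set.InjOn f ↑S ∧
  (∀ a ∈ S, ∀ b ∈ S, T.Adj a b → H.Adj (f a) (f b)) ∧
  (∀ a ∈ S, ∃ w : T.Walk a r, ∀ x ∈ w.support, x ∈ S) ∧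
  (∀ U : Finset V, 0 < U.card → U.card ≤ 2 * m →
    dem T d S f U ≤ (extNbhd H U \ S.image f).card)

lemma filter_card_eq {S : Finset γ} {f : γ → V} (hf : Set.InjOn f ↑S) (U : Finset V) :
    (S.filter (fun s => f s ∈ U)).card = (S.image f ∩ U).card := by
  rw [← Finset.card_image_of_injOn (hf.mono (by intro x hx; exact (Finset.mem_coe.2
    (Finset.mem_of_mem_filter x (Finset.mem_coe.1 hx)))))]
  congr 1
  ext v
  simp only [Finset.mem_image, Finset.mem_filter, Finset.mem_inter]
  constructor
  · rintro ⟨s, ⟨hs, hsU⟩, rfl⟩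
    exact ⟨⟨s, hs, rfl⟩, hsU⟩
  · rintro ⟨⟨s, hs, rfl⟩, hv⟩
    exact ⟨s, ⟨hs, hv⟩, rfl⟩

lemma dem_le {T : SimpleGraph γ} {d : ℕ} {S : Finset γ} {f : γ → V}
    (hdeg : ∀ s : γ, (T.neighborFinset s).card ≤ d)
    (hf : Set.InjOn f ↑S) (U : Finset V) :
    dem T d S f U ≤ d * U.card := by
  have h1 : ∑ s ∈ S.filter (fun s => f s ∈ U), rem T S s
      ≤ d * (S.filter (fun s => f s ∈ U)).card := by
    rw [Finset.card_eq_sum_ones, Finset.mul_sum]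
    apply Finset.sum_le_sum
    intro s _
    calc rem T S s ≤ (T.neighborFinset s).card := Finset.card_le_card (Finset.sdiff_subset)
      _ ≤ d * 1 := by rw [mul_one]; exact hdeg s
  have h2 : (U \ S.image f).card + (S.image f ∩ U).card = U.card := by
    rw [Finset.inter_comm]
    exact Finset.card_sdiff_add_card_inter U (S.image f)
  calc dem T d S f U ≤ d * (U \ S.image f).card + d * (S.image f ∩ U).card :=
        Nat.add_le_add_left (h1.trans (by rw [filter_card_eq hf])) _
    _ = d * U.card := by rw [← Nat.mul_add, h2]




lemma exists_cross_edge {S : Finset γ} {a b : γ} (w : T.Walk a b)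
    (ha : a ∉ S) (hb : b ∈ S) : ∃ t tp, t ∉ S ∧ tp ∈ S ∧ T.Adj tp t := by
  induction w with
  | nil => exact absurd hb ha
  | @cons x y z hadj p ih =>
    by_cases hy : y ∈ S
    · exact ⟨x, y, ha, hy, hadj.symm⟩
    · exact ih hy hb

lemma unique_nbr_in_S (hac : T.IsAcyclic) {S : Finset γ} {r t : γ} (htS : t ∉ S)
    (hconn : ∀ a ∈ S, ∃ w : T.Walk a r, ∀ x ∈ w.support, x ∈ S)
    {a b : γ} (haS : a ∈ S) (hbS : b ∈ S) (hat : T.Adj t a) (hbt : T.Adj t b) : a = b := by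
  obtain ⟨wa, hwa⟩ := hconn a haS
  obtain ⟨wb, hwb⟩ := hconn b hbS
  have hta : t ∉ (wa.toPath : T.Walk a r).support := fun h =>
    htS (hwa t (SimpleGraph.Walk.support_toPath_subset wa h))
  have htb : t ∉ (wb.toPath : T.Walk b r).support := fun h =>
    htS (hwb t (SimpleGraph.Walk.support_toPath_subset wb h))
  let pa : T.Path t r := ⟨SimpleGraph.Walk.cons hat (wa.toPath : T.Walk a r),
    (wa.toPath.2).cons hta⟩
  let pb : T.Path t r := ⟨SimpleGraph.Walk.cons hbt (wb.toPath : T.Walk b r),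
    (wb.toPath.2).cons htb⟩
  have hpq : pa = pb := hac.path_unique pa pb
  have hsup : (pa : T.Walk t r).support = (pb : T.Walk t r).support := by rw [hpq]
  have hsup2 : (wa.toPath : T.Walk a r).support = (wb.toPath : T.Walk b r).support := by
    simpa [pa, pb, SimpleGraph.Walk.support_cons] using hsup
  have ha' := SimpleGraph.Walk.support_eq_cons (wa.toPath : T.Walk a r)
  have hb' := SimpleGraph.Walk.support_eq_cons (wb.toPath : T.Walk b r)
  rw [ha', hb'] at hsup2
  exact (List.cons.injEq _ _ _ _ ▸ hsup2).1





lemma dem_modular (d : ℕ) (S : Finset γ) (f : γ → V) (A B : Finset V) :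
    dem T d S f A + dem T d S f B = dem T d S f (A ∪ B) + dem T d S f (A ∩ B) := by
  unfold dem
  have h1 : (A \ S.image f).card + (B \ S.image f).card
      = ((A ∪ B) \ S.image f).card + ((A ∩ B) \ S.image f).card := by
    have e3 : (A ∩ B) \ S.image f = (A \ S.image f) ∩ (B \ S.image f) := by
      ext v; simp only [Finset.mem_sdiff, Finset.mem_inter]; tauto
    rw [Finset.union_sdiff_distrib, e3, Finset.card_union_add_card_inter]
  have h2 : ∑ s ∈ S.filter (fun s => f s ∈ A), rem T S s
      + ∑ s ∈ S.filter (fun s => f s ∈ B), rem T S s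
      = ∑ s ∈ S.filter (fun s => f s ∈ A ∪ B), rem T S s
      + ∑ s ∈ S.filter (fun s => f s ∈ A ∩ B), rem T S s := by
    rw [Finset.sum_filter, Finset.sum_filter, Finset.sum_filter, Finset.sum_filter,
      ← Finset.sum_add_distrib, ← Finset.sum_add_distrib]
    apply Finset.sum_congr rfl
    intro s _
    by_cases hA : f s ∈ A <;> by_cases hB : f s ∈ B <;>
      simp [hA, hB, Finset.mem_union, Finset.mem_inter]
  have h1' : d * (A \ S.image f).card + d * (B \ S.image f).card
      = d * ((A ∪ B) \ S.image f).card + d * ((A ∩ B) \ S.image f).card := by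
    rw [← Nat.mul_add, ← Nat.mul_add, h1]
  omega


-- spine of extension lemma, to be appended after d.lean content
lemma sup_crit {P : Finset V → Prop} {B : Finset (Finset V)} (hB : B.Nonempty)
    (hmem : ∀ A ∈ B, P A) (hun : ∀ A A', P A → P A' → P (A ∪ A')) : P (B.sup id) := by
  induction hB using Finset.Nonempty.cons_induction with
  | singleton a => simpa using hmem a (by simp)
  | cons a s ha hs ih =>
    rw [Finset.sup_cons]
    exact hun _ _ (hmem a (Finset.mem_cons_self a s)) (ih (fun A hA => hmem A
      (Finset.mem_cons.2 (Or.inr hA))))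

lemma extend (H : SimpleGraph V) (T : SimpleGraph γ) (d m M : ℕ)
    (hd : 0 < d) (hm : 0 < m) (hM : 0 < M)
    (h1 : ∀ U : Finset V, 0 < U.card → U.card ≤ m →
      (extNbhd H U).card ≥ d * U.card + 1)
    (h2 : ∀ U : Finset V, m < U.card → U.card ≤ 2 * m →
      (extNbhd H U).card ≥ d * U.card + M)
    (hac : T.IsAcyclic) (hconnT : T.Connected)
    (hdeg : ∀ s : γ, (T.neighborFinset s).card ≤ d)
    (hcard : Fintype.card γ = M)
    {S : Finset γ} {f : γ → V} {r : γ} (hS : S ≠ Finset.univ)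
    (hg : Good H T d m S f r) :
    ∃ t y, t ∉ S ∧ Good H T d m (insert t S) (Function.update f t y) r := by
  obtain ⟨hrS, hinj, hadj, hwalk, hinv⟩ := hg
  set F := S.image f with hF
  -- find a crossing edge
  obtain ⟨t, tp, htS, htpS, htpt⟩ : ∃ t tp, t ∉ S ∧ tp ∈ S ∧ T.Adj tp t := by
    obtain ⟨b, hb⟩ : ∃ b, b ∉ S := by
      by_contra h
      push_neg at h
      exact hS (Finset.eq_univ_iff_forall.2 h)
    obtain ⟨w⟩ := hconnT.preconnected b r
    exact exists_cross_edge (T:=T) w hb hrS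
  set u := f tp with hu_def
  have huF : u ∈ F := Finset.mem_image_of_mem f htpS
  have htp_rem : 1 ≤ rem T S tp := by
    rw [Nat.one_le_iff_ne_zero, rem, Ne, Finset.card_eq_zero]
    intro h
    have : t ∈ T.neighborFinset tp \ S := by
      rw [Finset.mem_sdiff, SimpleGraph.mem_neighborFinset]
      exact ⟨htpt, htS⟩
    rw [h] at this
    exact absurd this (Finset.notMem_empty t)
  -- the filter of the singleton {u}
  have hfiltu : ∀ U : Finset V, u ∈ U → tp ∈ S.filter (fun s => f s ∈ U) :=
    fun U hU => Finset.mem_filter.2 ⟨htpS, hU⟩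
  have hfilt_single : S.filter (fun s => f s ∈ ({u} : Finset V)) = {tp} := by
    ext s
    simp only [Finset.mem_filter, Finset.mem_singleton]
    constructor
    · rintro ⟨hs, hsu⟩
      exact hinj (Finset.mem_coe.2 hs) (Finset.mem_coe.2 htpS) hsu
    · rintro rfl
      exact ⟨htpS, rfl⟩
  have hY : rem T S tp ≤ (extNbhd H {u} \ F).card := by
    have := hinv {u} (by simp) (by rw [Finset.card_singleton]; omega)
    rwa [dem, hfilt_single, Finset.sum_singleton, show ({u} : Finset V) \ F = ∅ by
      rw [Finset.sdiff_eq_empty_iff_subset]; exact Finset.singleton_subset_iff.2 huF,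
      Finset.card_empty, Nat.mul_zero, Nat.zero_add] at this
  -- critical sets
  set Crit : Finset V → Prop := fun U => 0 < U.card ∧ U.card ≤ 2 * m ∧ u ∉ U ∧
    (extNbhd H U \ F).card = dem T d S f U with hCrit
  have hScard : S.card + 1 ≤ M := by
    have := Finset.card_lt_card (lt_of_le_of_ne (Finset.subset_univ S) hS)
    rw [Finset.card_univ, hcard] at this
    omega
  have crit_le_m : ∀ U, Crit U → U.card ≤ m := by
    intro U hU
    obtain ⟨hpos, hle2m, huU, heq⟩ := hU
    by_contra hlt
    push_neg at hlt
    have hext := h2 U hlt hle2m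
    have hFS : F.card ≤ S.card := Finset.card_image_le
    have hsub : extNbhd H U ⊆ (extNbhd H U \ F) ∪ F := by
      intro v hv
      rw [Finset.mem_union, Finset.mem_sdiff]
      by_cases h : v ∈ F
      · exact Or.inr h
      · exact Or.inl ⟨hv, h⟩
    have hcard2 : (extNbhd H U).card ≤ (extNbhd H U \ F).card + F.card :=
      (Finset.card_le_card hsub).trans (Finset.card_union_le _ _)
    have hdemle := dem_le hdeg hinj U
    omega
  have crit_union : ∀ U₁ U₂, Crit U₁ → Crit U₂ → Crit (U₁ ∪ U₂) := by
    intro U₁ U₂ hU₁ hU₂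
    obtain ⟨hp₁, hle₁, hu₁, he₁⟩ := hU₁
    obtain ⟨hp₂, hle₂, hu₂, he₂⟩ := hU₂
    have hm₁ := crit_le_m U₁ ⟨hp₁, hle₁, hu₁, he₁⟩
    have hm₂ := crit_le_m U₂ ⟨hp₂, hle₂, hu₂, he₂⟩
    have hcardU : (U₁ ∪ U₂).card ≤ 2 * m := (Finset.card_union_le _ _).trans (by omega)
    have hposU : 0 < (U₁ ∪ U₂).card :=
      hp₁.trans_le (Finset.card_le_card Finset.subset_union_left)
    refine ⟨hposU, hcardU, fun h => (Finset.mem_union.1 h).elim hu₁ hu₂, ?_⟩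
    have hsm := extNbhd_submod H F U₁ U₂
    have hdm := dem_modular (T := T) d S f U₁ U₂
    have hinvU : dem T d S f (U₁ ∪ U₂) ≤ (extNbhd H (U₁ ∪ U₂) \ F).card := hinv _ hposU hcardU
    have hinvI : dem T d S f (U₁ ∩ U₂) ≤ (extNbhd H (U₁ ∩ U₂) \ F).card := by
      rcases Nat.eq_zero_or_pos (U₁ ∩ U₂).card with h0 | hpos
      · rw [Finset.card_eq_zero] at h0
        rw [h0, dem_empty, extNbhd_empty]
        exact Nat.zero_le _
      · exact hinv _ hpos ((Finset.card_le_card Finset.inter_subset_left).trans (by omega))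
    omega
  -- find a good new image vertex y
  obtain ⟨y, hyY, hygood⟩ : ∃ y ∈ extNbhd H {u} \ F, ∀ U, Crit U → y ∉ extNbhd H U := by
    classical
    set B : Finset (Finset V) := Finset.univ.filter Crit with hB
    have hYne : (extNbhd H {u} \ F).Nonempty := Finset.card_pos.1 (by omega)
    rcases Finset.eq_empty_or_nonempty B with hBe | hBne
    · obtain ⟨y, hy⟩ := hYne
      refine ⟨y, hy, fun U hU => ?_⟩
      exfalso
      have hUB : U ∈ B := Finset.mem_filter.2 ⟨Finset.mem_univ U, hU⟩
      rw [hBe] at hUB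
      exact Finset.notMem_empty U hUB
    · set Us : Finset V := B.sup id with hUs
      have hUsCrit : Crit Us := sup_crit hBne (fun A hA => (Finset.mem_filter.1 hA).2) crit_union
      have hsubUs : ∀ U, Crit U → U ⊆ Us := fun U hU =>
        Finset.le_sup (f := id) (Finset.mem_filter.2 ⟨Finset.mem_univ U, hU⟩)
      have hnot : ¬ (extNbhd H {u} \ F ⊆ extNbhd H Us ∪ Us) := by
        intro hsub
        obtain ⟨hposUs, hleUs, huUs, heqUs⟩ := hUsCrit
        have hUsm := crit_le_m Us ⟨hposUs, hleUs, huUs, heqUs⟩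
        set W : Finset V := insert u Us with hW
        have hWcard : W.card = Us.card + 1 := Finset.card_insert_of_notMem huUs
        have hWle : W.card ≤ 2 * m := by omega
        have hWpos : 0 < W.card := by omega
        have hinvW := hinv W hWpos hWle
        have hWF : W \ F = Us \ F := by
          ext v
          simp only [hW, Finset.mem_sdiff, Finset.mem_insert]
          constructor
          · rintro ⟨(rfl | h), hvF⟩
            · exact absurd huF hvF
            · exact ⟨h, hvF⟩
          · rintro ⟨h, hvF⟩
            exact ⟨Or.inr h, hvF⟩
        have hWfilt : S.filter (fun s => f s ∈ W) = insert tp (S.filter (fun s => f s ∈ Us)) := by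
          ext s
          simp only [Finset.mem_filter, Finset.mem_insert, hW]
          constructor
          · rintro ⟨hs, (hfs | hfs)⟩
            · exact Or.inl (hinj (Finset.mem_coe.2 hs) (Finset.mem_coe.2 htpS) hfs)
            · exact Or.inr ⟨hs, hfs⟩
          · rintro (rfl | ⟨hs, hfs⟩)
            · exact ⟨htpS, Or.inl rfl⟩
            · exact ⟨hs, Or.inr hfs⟩
        have htpnot : tp ∉ S.filter (fun s => f s ∈ Us) := fun h => huUs (Finset.mem_filter.1 h).2
        have hdemW : dem T d S f W = dem T d S f Us + rem T S tp := by
          rw [dem, dem, hWF, hWfilt, Finset.sum_insert htpnot]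
          ring
        have hsubW : extNbhd H W \ F ⊆ extNbhd H Us \ F := by
          intro v hv
          rw [Finset.mem_sdiff, mem_extNbhd] at hv
          obtain ⟨⟨hvW, w, hw, hadjw⟩, hvF⟩ := hv
          rw [Finset.mem_sdiff, mem_extNbhd]
          have hvUs : v ∉ Us := fun h => hvW (Finset.mem_insert.2 (Or.inr h))
          rcases Finset.mem_insert.1 hw with rfl | hwUs
          · have hvY : v ∈ extNbhd H {u} \ F := by
              rw [Finset.mem_sdiff, mem_extNbhd]
              refine ⟨⟨fun h => hvW ?_, ⟨u, Finset.mem_singleton_self u, hadjw⟩⟩, hvF⟩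
              rw [Finset.mem_singleton] at h
              rw [h]
              exact Finset.mem_insert_self _ _
            have hmem := hsub hvY
            rw [Finset.mem_union] at hmem
            rcases hmem with h | h
            · obtain ⟨_, w', hw', hadj'⟩ := (mem_extNbhd H).1 h
              exact ⟨⟨hvUs, w', hw', hadj'⟩, hvF⟩
            · exact absurd h hvUs
          · exact ⟨⟨hvUs, w, hwUs, hadjw⟩, hvF⟩
        have hfin : dem T d S f Us + rem T S tp ≤ (extNbhd H Us \ F).card := by
          rw [← hdemW]
          exact hinvW.trans (Finset.card_le_card hsubW)
        omega
      obtain ⟨y, hyY, hyn⟩ := Finset.not_subset.1 hnot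
      refine ⟨y, hyY, fun U hU hyU => ?_⟩
      rw [mem_extNbhd] at hyU
      obtain ⟨hyU1, w, hwU, hadjw⟩ := hyU
      apply hyn
      rw [Finset.mem_union]
      by_cases hyUs : y ∈ Us
      · exact Or.inr hyUs
      · exact Or.inl ((mem_extNbhd H).2 ⟨hyUs, w, hsubUs U hU hwU, hadjw⟩)
  refine ⟨t, y, htS, ?_⟩
  rw [Finset.mem_sdiff] at hyY
  obtain ⟨hyext, hyF⟩ := hyY
  have hAdjuy : H.Adj u y := by
    rw [mem_extNbhd] at hyext
    obtain ⟨_, w, hw, hadjw⟩ := hyext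
    rwa [Finset.mem_singleton.1 hw] at hadjw
  have huniq : ∀ s ∈ S, T.Adj s t → s = tp := fun s hs hst =>
    unique_nbr_in_S hac htS hwalk hs htpS hst.symm htpt.symm
  set S' := insert t S with hS'
  set f' := Function.update f t y with hf'
  have hful : ∀ s ∈ S, f' s = f s := fun s hs =>
    Function.update_of_ne (by rintro rfl; exact htS hs) y f
  have hft : f' t = y := Function.update_self t y f
  have himg : S'.image f' = insert y F := by
    rw [hS', Finset.image_insert, hft, hF]
    congr 1
    exact Finset.image_congr (fun s hs => hful s hs)
  refine ⟨Finset.mem_insert_of_mem hrS, ?_, ?_, ?_, ?_⟩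
  · -- injectivity
    intro a ha b hb hab
    rw [hS', Finset.coe_insert, Set.mem_insert_iff] at ha hb
    rcases ha with rfl | ha <;> rcases hb with rfl | hb
    · rfl
    · rw [hft, hful b (Finset.mem_coe.1 hb)] at hab
      exact absurd (Finset.mem_image_of_mem f (Finset.mem_coe.1 hb)) (hab ▸ hyF)
    · rw [hft, hful a (Finset.mem_coe.1 ha)] at hab
      exact absurd (Finset.mem_image_of_mem f (Finset.mem_coe.1 ha)) (hab ▸ hyF).elim
    · rw [hful a (Finset.mem_coe.1 ha), hful b (Finset.mem_coe.1 hb)] at hab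
      exact hinj ha hb hab
  · -- adjacency
    intro a ha b hb hadjab
    rcases Finset.mem_insert.1 ha with rfl | ha' <;> rcases Finset.mem_insert.1 hb with rfl | hb'
    · exact absurd rfl hadjab.ne
    · have hb2 := huniq b hb' hadjab.symm
      subst hb2
      rw [hft, hful b hb']
      exact hAdjuy.symm
    · have ha2 := huniq a ha' hadjab
      subst ha2
      rw [hft, hful a ha']
      exact hAdjuy
    · rw [hful a ha', hful b hb']
      exact hadj a ha' b hb' hadjab
  · -- walks
    intro a ha
    rcases Finset.mem_insert.1 ha with rfl | ha'
    · obtain ⟨w, hw⟩ := hwalk tp htpS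
      refine ⟨SimpleGraph.Walk.cons htpt.symm w, ?_⟩
      intro x hx
      rw [SimpleGraph.Walk.support_cons, List.mem_cons] at hx
      rcases hx with rfl | hx
      · exact Finset.mem_insert_self _ _
      · exact Finset.mem_insert_of_mem (hw x hx)
    · obtain ⟨w, hw⟩ := hwalk a ha'
      exact ⟨w, fun x hx => Finset.mem_insert_of_mem (hw x hx)⟩
  · -- the invariant
    intro U hUpos hUle
    have hinvU := hinv U hUpos hUle
    rw [himg]
    have key2 : (extNbhd H U \ F).card =
        (extNbhd H U \ insert y F).card + (if y ∈ extNbhd H U then 1 else 0) := by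
      have he : extNbhd H U \ insert y F = (extNbhd H U \ F).erase y := by
        ext v
        simp only [Finset.mem_sdiff, Finset.mem_erase, Finset.mem_insert]
        tauto
      rw [he]
      by_cases hy : y ∈ extNbhd H U
      · rw [if_pos hy, Finset.card_erase_of_mem (Finset.mem_sdiff.2 ⟨hy, hyF⟩)]
        have hYpos : 0 < (extNbhd H U \ F).card :=
          Finset.card_pos.2 ⟨y, Finset.mem_sdiff.2 ⟨hy, hyF⟩⟩
        omega
      · rw [if_neg hy, Finset.erase_eq_of_notMem (fun h => hy (Finset.mem_sdiff.1 h).1),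
          Nat.add_zero]
    have hUF' : d * (U \ F).card = d * (U \ insert y F).card + d * (if y ∈ U then 1 else 0) := by
      have he : U \ insert y F = (U \ F).erase y := by
        ext v
        simp only [Finset.mem_sdiff, Finset.mem_erase, Finset.mem_insert]
        tauto
      rw [he]
      by_cases hy : y ∈ U
      · rw [if_pos hy, Finset.card_erase_of_mem (Finset.mem_sdiff.2 ⟨hy, hyF⟩), mul_one]
        have hUpos2 : 0 < (U \ F).card := Finset.card_pos.2 ⟨y, Finset.mem_sdiff.2 ⟨hy, hyF⟩⟩
        have hsucc : (U \ F).card - 1 + 1 = (U \ F).card := by omega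
        nth_rewrite 1 [← hsucc]
        rw [Nat.mul_add, Nat.mul_one]
      · rw [if_neg hy, Finset.erase_eq_of_notMem (fun h => hy (Finset.mem_sdiff.1 h).1),
          Nat.mul_zero, Nat.add_zero]
    have hfilt' : S.filter (fun s => f' s ∈ U) = S.filter (fun s => f s ∈ U) := by
      apply Finset.filter_congr
      intro s hs
      rw [hful s hs]
    have hsum_split : ∑ s ∈ S'.filter (fun s => f' s ∈ U), rem T S' s =
        (if y ∈ U then rem T S' t else 0) + ∑ s ∈ S.filter (fun s => f s ∈ U), rem T S' s := by
      rw [hS', Finset.filter_insert, hft]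
      by_cases hy : y ∈ U
      · rw [if_pos hy, if_pos hy,
          Finset.sum_insert (fun h => htS (Finset.mem_of_mem_filter t h)), hfilt']
      · rw [if_neg hy, if_neg hy, hfilt', Nat.zero_add]
    have hremt : rem T S' t + 1 ≤ d := by
      have hsub1 : T.neighborFinset t \ S' ⊆ (T.neighborFinset t).erase tp := by
        intro v hv
        rw [Finset.mem_sdiff] at hv
        rw [Finset.mem_erase]
        exact ⟨fun h => hv.2 (h ▸ Finset.mem_insert_of_mem htpS), hv.1⟩
      have h2' : tp ∈ T.neighborFinset t := by
        rw [SimpleGraph.mem_neighborFinset]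
        exact htpt.symm
      have h3 := Finset.card_le_card hsub1
      rw [Finset.card_erase_of_mem h2'] at h3
      have h4 := hdeg t
      have h5 : 0 < (T.neighborFinset t).card := Finset.card_pos.2 ⟨tp, h2'⟩
      unfold rem
      omega
    have hremmono : ∀ s, rem T S' s ≤ rem T S s := by
      intro s
      apply Finset.card_le_card
      intro v hv
      rw [Finset.mem_sdiff] at hv ⊢
      exact ⟨hv.1, fun h => hv.2 (Finset.mem_insert_of_mem h)⟩
    have hremtp : rem T S' tp + 1 ≤ rem T S tp := by
      have hsub1 : T.neighborFinset tp \ S' ⊆ (T.neighborFinset tp \ S).erase t := by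
        intro v hv
        rw [Finset.mem_sdiff] at hv
        rw [Finset.mem_erase, Finset.mem_sdiff]
        exact ⟨fun h => hv.2 (h ▸ Finset.mem_insert_self t S),
          ⟨hv.1, fun h => hv.2 (Finset.mem_insert_of_mem h)⟩⟩
      have h2' : t ∈ T.neighborFinset tp \ S := by
        rw [Finset.mem_sdiff, SimpleGraph.mem_neighborFinset]
        exact ⟨htpt, htS⟩
      have h3 := Finset.card_le_card hsub1
      rw [Finset.card_erase_of_mem h2'] at h3
      have h5 : 0 < (T.neighborFinset tp \ S).card := Finset.card_pos.2 ⟨t, h2'⟩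
      unfold rem
      omega
    have hsum2 : ∑ s ∈ S.filter (fun s => f s ∈ U), rem T S' s + (if u ∈ U then 1 else 0)
        ≤ ∑ s ∈ S.filter (fun s => f s ∈ U), rem T S s := by
      by_cases hu : u ∈ U
      · rw [if_pos hu]
        have htpf : tp ∈ S.filter (fun s => f s ∈ U) := hfiltu U hu
        rw [← Finset.sum_erase_add _ _ htpf, ← Finset.sum_erase_add _ (rem T S) htpf]
        have hle : ∑ x ∈ (S.filter (fun s => f s ∈ U)).erase tp, rem T S' x
            ≤ ∑ x ∈ (S.filter (fun s => f s ∈ U)).erase tp, rem T S x :=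
          Finset.sum_le_sum (fun s _ => hremmono s)
        omega
      · rw [if_neg hu, Nat.add_zero]
        exact Finset.sum_le_sum (fun s _ => hremmono s)
    have key1 : dem T d S' f' U + (if u ∈ U then 1 else 0) ≤ dem T d S f U := by
      rw [dem, dem, himg, hsum_split]
      rw [← hF]
      by_cases hy : y ∈ U <;> by_cases hu : u ∈ U <;>
        simp only [hy, hu, if_true, if_false, mul_one, mul_zero] at hUF' hsum2 ⊢ <;>
        omega
    by_cases hyext2 : y ∈ extNbhd H U
    · rw [if_pos hyext2] at key2
      by_cases hu : u ∈ U
      · rw [if_pos hu] at key1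
        omega
      · have hne : (extNbhd H U \ F).card ≠ dem T d S f U := fun h =>
          hygood U ⟨hUpos, hUle, hu, h⟩ hyext2
        rw [if_neg hu, Nat.add_zero] at key1
        omega
    · rw [if_neg hyext2, Nat.add_zero] at key2
      have key1' : dem T d S' f' U ≤ dem T d S f U :=
        le_trans (Nat.le_add_right _ _) key1
      omega


lemma grow (H : SimpleGraph V) (T : SimpleGraph γ) (d m M : ℕ)
    (hd : 0 < d) (hm : 0 < m) (hM : 0 < M)
    (h1 : ∀ U : Finset V, 0 < U.card → U.card ≤ m →
      (extNbhd H U).card ≥ d * U.card + 1)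
    (h2 : ∀ U : Finset V, m < U.card → U.card ≤ 2 * m →
      (extNbhd H U).card ≥ d * U.card + M)
    (hac : T.IsAcyclic) (hconnT : T.Connected)
    (hdeg : ∀ s : γ, (T.neighborFinset s).card ≤ d)
    (hcard : Fintype.card γ = M) (n : ℕ) :
    ∀ {S : Finset γ} {f : γ → V} {r : γ}, Good H T d m S f r →
      (Finset.univ \ S).card = n → ∃ g, Good H T d m Finset.univ g r := by
  induction n with
  | zero =>
    intro S f r hg hc
    have hSu : S = Finset.univ := by
      rw [Finset.card_eq_zero, Finset.sdiff_eq_empty_iff_subset] at hc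
      exact Finset.univ_subset_iff.1 hc
    subst hSu
    exact ⟨f, hg⟩
  | succ n ih =>
    intro S f r hg hc
    have hS : S ≠ Finset.univ := by
      intro h
      rw [h, Finset.sdiff_self, Finset.card_empty] at hc
      omega
    obtain ⟨t, y, htS, hg'⟩ := extend H T d m M hd hm hM h1 h2 hac hconnT hdeg hcard hS hg
    refine ih hg' ?_
    have he : Finset.univ \ insert t S = (Finset.univ \ S).erase t := by
      ext x
      simp only [Finset.mem_sdiff, Finset.mem_erase, Finset.mem_insert, Finset.mem_univ,
        true_and]
      tauto
    rw [he, Finset.card_erase_of_mem (Finset.mem_sdiff.2 ⟨Finset.mem_univ t, htS⟩), hc]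
    omega

end Haxell


/-- Haxell's tree-embedding theorem: let `d, m, M` be positive integers, and let `H` be a
non-empty graph such that (1) every `U ⊆ V(H)` with `0 < |U| ≤ m` has `|N_H(U)| ≥ d|U| + 1`,
and (2) every `U ⊆ V(H)` with `m < |U| ≤ 2m` has `|N_H(U)| ≥ d|U| + M`. Then `H` contains a
copy of every tree `T` with `M` vertices and maximum degree at most `d`. -/
theorem tree_embedding_haxell {V : Type*} [Fintype V] [Nonempty V]
    (d m M : ℕ) (hd : 0 < d) (hm : 0 < m) (hM : 0 < M)
    (H : SimpleGraph V)
    (h1 : ∀ U : Finset V, 0 < U.card → U.card ≤ m →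
      (extNbhd H U).card ≥ d * U.card + 1)
    (h2 : ∀ U : Finset V, m < U.card → U.card ≤ 2 * m →
      (extNbhd H U).card ≥ d * U.card + M)
    {γ : Type*} [Fintype γ] (T : SimpleGraph γ) (hT : T.IsTree)
    (hTcard : Fintype.card γ = M)
    (hTdeg : ∀ v : γ, (T.neighborSet v).ncard ≤ d) :
    ∃ f : γ → V, Function.Injective f ∧ ∀ a b : γ, T.Adj a b → H.Adj (f a) (f b) := by
  classical
  have hγ : Nonempty γ := Fintype.card_pos_iff.1 (by omega)
  obtain ⟨r⟩ := hγ
  obtain ⟨v₀⟩ := ‹Nonempty V›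
  have hdeg : ∀ s : γ, (T.neighborFinset s).card ≤ d := by
    intro s
    have h := hTdeg s
    rwa [Set.ncard_eq_toFinset_card'] at h
  have hbase : Haxell.Good H T d m {r} (fun _ => v₀) r := by
    refine ⟨Finset.mem_singleton_self r, ?_, ?_, ?_, ?_⟩
    · intro a ha b hb _
      rw [Finset.coe_singleton, Set.mem_singleton_iff] at ha hb
      rw [ha, hb]
    · intro a ha b hb hab
      rw [Finset.mem_singleton] at ha hb
      subst ha; subst hb
      exact absurd rfl hab.ne
    · intro a ha
      rw [Finset.mem_singleton] at ha
      subst ha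
      exact ⟨SimpleGraph.Walk.nil, by simp⟩
    · intro U hUpos hUle
      have hinj0 : Set.InjOn (fun _ : γ => v₀) ↑({r} : Finset γ) := by
        intro a ha b hb _
        rw [Finset.coe_singleton, Set.mem_singleton_iff] at ha hb
        rw [ha, hb]
      have hdemle := Haxell.dem_le hdeg hinj0 U
      have himg : ({r} : Finset γ).image (fun _ => v₀) = {v₀} := by simp
      rw [himg]
      have hsub : extNbhd H U ⊆ (extNbhd H U \ {v₀}) ∪ {v₀} := by
        intro v hv
        rw [Finset.mem_union, Finset.mem_sdiff]
        by_cases h : v ∈ ({v₀} : Finset V)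
        · exact Or.inr h
        · exact Or.inl ⟨hv, h⟩
      have hcard2 : (extNbhd H U).card ≤ (extNbhd H U \ {v₀}).card + 1 :=
        (Finset.card_le_card hsub).trans ((Finset.card_union_le _ _).trans (by simp))
      have hlower : d * U.card + 1 ≤ (extNbhd H U).card := by
        rcases le_or_gt U.card m with h | h
        · exact h1 U hUpos h
        · have := h2 U h hUle
          omega
      omega
  obtain ⟨g, hg⟩ := Haxell.grow H T d m M hd hm hM h1 h2 hT.IsAcyclic hT.isConnected hdeg
    hTcard (Finset.univ \ {r}).card hbase rfl
  obtain ⟨_, hinj, hadj, _, _⟩ := hg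
  refine ⟨g, ?_, ?_⟩
  · rw [← Set.injOn_univ, ← Finset.coe_univ]
    exact hinj
  · intro a b hab
    exact hadj a (Finset.mem_univ a) b (Finset.mem_univ b) hab
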